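/- Stationary covariance and derivatives in mean square: let H be a real Hilbert space, n ≥ 1, and let X : ℝ → H be n-times differentiable (as a map into H). Suppose there is a function ρ : ℝ → ℝ with ⟨X(s), X(t)⟩ = ρ(t − s) for all s, t ∈ ℝ. Then ρ is 2n-times differentiable and, for every t ∈ ℝ, ‖X^{(n)}(t)‖² = (−1)^n ρ^{(2n)}(0). -/

import Mathlib

/-- Stationary covariance and derivatives in mean square: if `X : ℝ → H` is `n`-times
differentiable into a real Hilbert space and `⟨X(s), X(t)⟩ = ρ(t-s)`, then `ρ` is
`2n`-times differentiable and `‖X⁽ⁿ⁾(t)‖² = (-1)ⁿ ρ⁽²ⁿ⁾(0)` for every `t`. -/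
theorem stationary_covariance_iterated_deriv
    {H : Type*} [NormedAddCommGroup H] [InnerProductSpace ℝ H]
    (n : ℕ) (hn : 1 ≤ n)
    (X : ℝ → H) (hX : ∀ k < n, Differentiable ℝ (iteratedDeriv k X))
    (ρ : ℝ → ℝ) (hρ : ∀ s t : ℝ, inner ℝ (X s) (X t) = ρ (t - s)) :
    (∀ k < 2 * n, Differentiable ℝ (iteratedDeriv k ρ))
    ∧ ∀ t : ℝ, ‖iteratedDeriv n X t‖ ^ 2 = (-1 : ℝ) ^ n * iteratedDeriv (2 * n) ρ 0 := by
  -- derivative of `t ↦ ⟪c, X⁽ᵏ⁾ t⟫` for `k < n`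
  have hder : ∀ k, k < n → ∀ (c : H) (u : ℝ),
      HasDerivAt (fun t => (inner ℝ c (iteratedDeriv k X t) : ℝ))
        (inner ℝ c (iteratedDeriv (k+1) X u)) u := by
    intro k hk c u
    have h1 : HasDerivAt (iteratedDeriv k X) (iteratedDeriv (k+1) X u) u := by
      rw [iteratedDeriv_succ]
      exact (hX k hk u).hasDerivAt
    have h2 := (hasDerivAt_const u c).inner ℝ h1
    simpa using h2
  -- derivative of `u ↦ ⟪c, X⁽ᵏ⁾ (u + s)⟫`
  have hshift : ∀ k, k < n → ∀ (c : H) (s u : ℝ),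
      HasDerivAt (fun u => (inner ℝ c (iteratedDeriv k X (u + s)) : ℝ))
        (inner ℝ c (iteratedDeriv (k+1) X (u + s))) u := by
    intro k hk c s u
    have hh : HasDerivAt (fun u : ℝ => u + s) 1 u := (hasDerivAt_id u).add_const s
    have := (hder k hk c (u + s)).scomp (x := u) (h := fun u : ℝ => u + s) hh
    simpa [Function.comp_def] using this
  -- derivative of `u ↦ ⟪c, X⁽ʲ⁾ (t - u)⟫`
  have hneg : ∀ j, j < n → ∀ (c : H) (t u : ℝ),
      HasDerivAt (fun u => (inner ℝ c (iteratedDeriv j X (t - u)) : ℝ))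
        (-(inner ℝ c (iteratedDeriv (j+1) X (t - u)) : ℝ)) u := by
    intro j hj c t u
    have hh : HasDerivAt (fun u : ℝ => t - u) (-1) u := (hasDerivAt_id u).const_sub t
    have := (hder j hj c (t - u)).scomp (x := u) (h := fun u : ℝ => t - u) hh
    simpa [Function.comp_def] using this
  -- Phase 1: derivatives in the second variable
  have A : ∀ k, k ≤ n → ∀ s t : ℝ,
      iteratedDeriv k ρ (t - s) = inner ℝ (X s) (iteratedDeriv k X t) := by
    intro k
    induction k with
    | zero =>
      intro _ s t
      simpa [iteratedDeriv_zero] using (hρ s t).symm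
    | succ k ih =>
      intro hk s t
      have hk' : k < n := hk
      have heq : iteratedDeriv k ρ
          = fun u => (inner ℝ (X s) (iteratedDeriv k X (u + s)) : ℝ) := by
        funext u
        have h := ih (le_of_lt hk') s (u + s)
        have h0 : u + s - s = u := by ring
        rw [h0] at h
        exact h
      rw [iteratedDeriv_succ, heq, (hshift k hk' (X s) s (t - s)).deriv]
      have h0 : t - s + s = t := by ring
      rw [h0]
  -- Phase 2: derivatives in the first variable
  have Q : ∀ j, j ≤ n → ∀ s t : ℝ,
      iteratedDeriv (n + j) ρ (t - s)
        = (-1 : ℝ) ^ j * inner ℝ (iteratedDeriv n X t) (iteratedDeriv j X s) := by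
    intro j
    induction j with
    | zero =>
      intro _ s t
      simpa [iteratedDeriv_zero, real_inner_comm] using A n le_rfl s t
    | succ j ih =>
      intro hj s t
      have hj' : j < n := hj
      have heq : iteratedDeriv (n + j) ρ
          = fun u => (-1 : ℝ) ^ j *
              (inner ℝ (iteratedDeriv n X t) (iteratedDeriv j X (t - u)) : ℝ) := by
        funext u
        have h := ih (le_of_lt hj') (t - u) t
        have h0 : t - (t - u) = u := by ring
        rw [h0] at h
        exact h
      have hstep : n + (j + 1) = (n + j) + 1 := rfl
      rw [hstep, iteratedDeriv_succ, heq,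
        ((hneg j hj' (iteratedDeriv n X t) t (t - s)).const_mul ((-1 : ℝ) ^ j)).deriv]
      have h0 : t - (t - s) = s := by ring
      rw [h0, pow_succ]
      ring
  constructor
  · intro k hk
    rcases lt_or_ge k n with h | h
    · have heq : iteratedDeriv k ρ
          = fun t => (inner ℝ (X 0) (iteratedDeriv k X t) : ℝ) := by
        funext t
        have h1 := A k (le_of_lt h) 0 t
        have h0 : t - 0 = t := by ring
        rw [h0] at h1
        exact h1
      rw [heq]
      exact fun t => (hder k h (X 0) t).differentiableAt
    · obtain ⟨j, rfl⟩ : ∃ j, k = n + j := ⟨k - n, by omega⟩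
      have hj : j < n := by omega
      have heq : iteratedDeriv (n + j) ρ
          = fun u => (-1 : ℝ) ^ j *
              (inner ℝ (iteratedDeriv n X 0) (iteratedDeriv j X (0 - u)) : ℝ) := by
        funext u
        have h1 := Q j (le_of_lt hj) (0 - u) 0
        have h0 : (0 : ℝ) - (0 - u) = u := by ring
        rw [h0] at h1
        exact h1
      rw [heq]
      exact fun u => ((hneg j hj (iteratedDeriv n X 0) 0 u).const_mul
        ((-1 : ℝ) ^ j)).differentiableAt
  · intro t
    have h := Q n le_rfl t t
    rw [sub_self] at h
    have h2n : 2 * n = n + n := two_mul n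
    rw [h2n, h, real_inner_self_eq_norm_sq, ← mul_assoc, ← pow_add,
      Even.neg_one_pow ⟨n, rfl⟩, one_mul]
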